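/- The implicit midpoint scheme (x_{k+1} - x_k)/h = J∇H((x_{k+1}+x_k)/2) + C((x_{k+1}+x_k)/2)u_k applied to the SVG system with zero disturbance exactly conserves the Hamiltonian: H(x_{k+1}) = H(x_k) for every step, for any control u_k ∈ ℝ² and step size h > 0. -/

import Mathlib

/-- The implicit midpoint scheme applied to the SVG system with
zero disturbance exactly conserves the Hamiltonian: `H(x_{k+1}) = H(x_k)`. -/
theorem svg_midpoint_energy_conservation
    (L C ω h : ℝ) (hL : 0 < L) (hC : 0 < C) (hω : 0 < ω) (hh : 0 < h)
    (xk xk1 : Fin 5 → ℝ) (u : Fin 2 → ℝ)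
    (m : Fin 5 → ℝ) (hm : m = fun i => (xk i + xk1 i) / 2)
    (J : Matrix (Fin 5) (Fin 5) ℝ)
    (hJ : J = !![0, ω/L, -(1/(C*L)), 0, 0;
                 -(ω/L), 0, 0, -(1/(C*L)), 0;
                 1/(C*L), 0, 0, ω/C, 0;
                 0, 1/(C*L), -(ω/C), 0, 0;
                 0, 0, 0, 0, 0])
    (Cm : Matrix (Fin 5) (Fin 2) ℝ)
    (hCm : Cm = !![1/L, 0; 0, 1/L; 0, 0; 0, 0; -(m 0), -(m 1)])
    (hstep : xk1 - xk
      = h • (J.mulVec ![L * m 0, L * m 1, C * m 2, C * m 3, 1] + Cm.mulVec u)) :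
    L / 2 * ((xk1 0) ^ 2 + (xk1 1) ^ 2) + C / 2 * ((xk1 2) ^ 2 + (xk1 3) ^ 2) + xk1 4
      = L / 2 * ((xk 0) ^ 2 + (xk 1) ^ 2) + C / 2 * ((xk 2) ^ 2 + (xk 3) ^ 2) + xk 4 := by
  subst hJ hCm hm
  have h0 := congrFun hstep 0
  have h1 := congrFun hstep 1
  have h2 := congrFun hstep 2
  have h3 := congrFun hstep 3
  have h4 := congrFun hstep 4
  simp [Matrix.mulVec, dotProduct, Fin.sum_univ_five, Matrix.cons_val_zero,
    Matrix.cons_val_one, Matrix.head_cons, Matrix.cons_val_succ, Matrix.vecHead,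
    Matrix.vecTail, Function.comp, Pi.sub_apply] at h0 h1 h2 h3 h4
  have hL' := hL.ne'
  have hC' := hC.ne'
  field_simp at h0 h1 h2 h3 h4
  have hscale : (8 : ℝ) * L ^ 2 * C ^ 2 ≠ 0 := by positivity
  apply mul_right_cancel₀ hscale
  linear_combination (2 * L ^ 2 * C ^ 2 * (xk 0 + xk1 0)) * h0 + (2 * L ^ 2 * C ^ 2 * (xk 1 + xk1 1)) * h1
    + (2 * L ^ 2 * C ^ 2 * (xk 2 + xk1 2)) * h2 + (2 * L ^ 2 * C ^ 2 * (xk 3 + xk1 3)) * h3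
    + (4 * L ^ 2 * C ^ 2) * h4
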